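/- arXiv:2204.04281 — 2 statements merged into one kernel-verified Lean document; each statement's English description precedes it below -/
import Mathlib

section
/- (Proposition: exponent lower bound for simple configurations). For every simple configuration (F, π) with F = (V, E, h, p, q) and partition π, the exponent η(F, π) := |L₀(F,π)|/4 + 1 − |π| + (1/2) ∑_{v ∈ V∖R(F)} p_v satisfies η(F, π) ≥ (|R(F)| − |R₀(F)|)/4, where |R(F)| − |R₀(F)| is the number of non-trivial roots of F. -/
open Filter Matrix
open scoped ENNReal NNReal Topology

noncomputable section
attribute [local instance] Classical.propDecidable

/-- A decorated forest `F = (V, E, h, p, q)` (Definition 5.1 of the paper).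
Vertices are `{0, …, n-1}`; `parent v = some u` encodes the directed edge `u → v`.
The decreasing height function along edges guarantees that the directed graph
`(V, E)` is a forest. -/
structure DecForest where
  n : ℕ
  parent : Fin n → Option (Fin n)
  height : Fin n → ℕ
  pw : Fin n → ℕ
  qw : Fin n → ℕ
  height_parent : ∀ v u, parent v = some u → height v + 1 = height u
  pw_pos : ∀ v, parent v ≠ none → 1 ≤ pw v
  height_zero_no_children : ∀ u, height u = 0 → ∀ v, parent v ≠ some u
  childless_qw : ∀ u, (∀ v, parent v ≠ some u) → 1 ≤ qw u → height u = 0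
  conservation : ∀ u : Fin n, (∃ v, parent v = some u) →
    qw u = ∑ v ∈ Finset.univ.filter (fun v => parent v = some u), pw v

namespace DecForest

variable (F : DecForest)

/-- `v` is a root of the forest. -/
def isRoot (v : Fin F.n) : Prop := F.parent v = none

/-- The set of children of a vertex. -/
def children (u : Fin F.n) : Finset (Fin F.n) :=
  Finset.univ.filter fun v => F.parent v = some u

/-- The number of children of a vertex. -/
def childCount (u : Fin F.n) : ℕ := (F.children u).card

/-- `v` is a leaf: a non-root vertex without children. -/
def isLeaf (v : Fin F.n) : Prop := F.parent v ≠ none ∧ F.childCount v = 0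

/-- `v` is a trivial root: a root without children. -/
def isTrivialRoot (v : Fin F.n) : Prop := F.parent v = none ∧ F.childCount v = 0

/-- Two (non-root) vertices are siblings if they are distinct and share a parent. -/
def sibling (u v : Fin F.n) : Prop :=
  u ≠ v ∧ ∃ w, F.parent u = some w ∧ F.parent v = some w

/-- The number of non-trivial roots `|R(F)| - |R₀(F)|`. -/
def nontrivialRootCount : ℕ :=
  (Finset.univ.filter fun v => F.isRoot v ∧ F.childCount v ≠ 0).card

end DecForest

/-- The polynomial `γ(Ψ; F, ℓ) = N⁻¹ ∏_{u→v ∈ E} Ψ_{ℓ_u ℓ_v}^{p_v}`. -/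
def gammaPoly {N : ℕ} (F : DecForest) (Ψ : Matrix (Fin N) (Fin N) ℝ)
    (ℓ : Fin F.n → Fin N) : ℝ :=
  (N : ℝ)⁻¹ * ∏ v : Fin F.n, (F.parent v).elim 1 fun u => Ψ (ℓ u) (ℓ v) ^ F.pw v

/-- A coloring `ℓ` is consistent with the partition whose blocks are the fibers of `b`. -/
def Consistent {n N : ℕ} (b : Fin n → Fin n) (ℓ : Fin n → Fin N) : Prop :=
  ∀ u v, ℓ u = ℓ v ↔ b u = b v

/-- `Γ(Ψ; F, π) = ∑_{ℓ ∈ C(π)} γ(Ψ; F, ℓ)`, the partition `π` being encoded by the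
fibers of the function `b`. -/
def GammaSum {N : ℕ} (F : DecForest) (b : Fin F.n → Fin F.n)
    (Ψ : Matrix (Fin N) (Fin N) ℝ) : ℝ :=
  ∑ ℓ ∈ Finset.univ.filter (fun ℓ : Fin F.n → Fin N => Consistent b ℓ), gammaPoly F Ψ ℓ

/-- The number `|π|` of blocks of the partition encoded by `b`. -/
def numBlocks {n : ℕ} (b : Fin n → Fin n) : ℕ := (Finset.univ.image b).card

/-- The cardinality of the block of `v` in the partition encoded by `b`. -/
def blockCard {n : ℕ} (b : Fin n → Fin n) (v : Fin n) : ℕ :=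
  (Finset.univ.filter fun u => b u = b v).card

/-- `v, v'` is a pair of nullifying leaves (with the corresponding pair of nullifying
edges) for the configuration `(F, π)`. -/
def NullifyingPair (F : DecForest) (b : Fin F.n → Fin F.n) (v v' : Fin F.n) : Prop :=
  v ≠ v' ∧ F.isLeaf v ∧ F.isLeaf v' ∧ F.pw v = 1 ∧ F.pw v' = 1 ∧
    b v = b v' ∧ (∀ u, b u = b v → u = v ∨ u = v') ∧
    ∀ u u', F.parent v = some u → F.parent v' = some u' → b u ≠ b u'

/-- `v, v'` is a removable pair of leaves (with the corresponding removable pair of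
edges) for the configuration `(F, π)`. -/
def RemovablePair (F : DecForest) (b : Fin F.n → Fin F.n) (v v' : Fin F.n) : Prop :=
  v ≠ v' ∧ F.isLeaf v ∧ F.isLeaf v' ∧ F.pw v = 1 ∧ F.pw v' = 1 ∧
    b v = b v' ∧ (∀ u, b u = b v → u = v ∨ u = v') ∧
    ∀ u u', F.parent v = some u → F.parent v' = some u' → b u = b u'

/-- The number `|L₀(F, π)|` of nullifying leaves of the configuration. -/
def nullLeafCount (F : DecForest) (b : Fin F.n → Fin F.n) : ℕ :=
  (Finset.univ.filter fun v => ∃ v', NullifyingPair F b v v').card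

/-- The exponent `η(F, π) = |L₀(F,π)|/4 + 1 - |π| + (1/2) ∑_{v ∉ R(F)} p_v`. -/
def etaExponent (F : DecForest) (b : Fin F.n → Fin F.n) : ℝ :=
  (nullLeafCount F b : ℝ) / 4 + 1 - (numBlocks b : ℝ) +
    (1 / 2 : ℝ) * ∑ v ∈ Finset.univ.filter (fun v => F.parent v ≠ none), (F.pw v : ℝ)

/-- The contribution of a vertex to the parity count of its block (also the exponent of
its sign variable): `q_u` for non-trivial roots, `p_v` for leaves, `p_u + q_u` for
internal non-root vertices, `0` for trivial roots. -/
def vertexContrib (F : DecForest) (v : Fin F.n) : ℕ :=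
  if F.parent v = none then (if F.childCount v = 0 then 0 else F.qw v)
  else if F.childCount v = 0 then F.pw v
  else F.pw v + F.qw v

/-- The parity rule/property: the total contribution of every block is even. -/
def ParityProp (F : DecForest) (b : Fin F.n → Fin F.n) : Prop :=
  ∀ v : Fin F.n,
    Even (∑ u ∈ Finset.univ.filter (fun u => b u = b v), vertexContrib F u)

/-- Relevant configurations (Definition 5.6 of the paper). -/
structure RelevantConfig (F : DecForest) (b : Fin F.n → Fin F.n) : Prop where
  root_rule : ∀ u v, F.isRoot u → F.isRoot v → b u = b v
  sibling_rule : ∀ u v, F.sibling u v → b u ≠ b v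
  forbidden_weights : ∀ v, ¬F.isRoot v →
    ¬(F.pw v = 1 ∧ F.qw v = 1) ∧ ¬(F.pw v = 2 ∧ F.qw v = 0)
  leaf_rule : ∀ v, F.isLeaf v → 1 ≤ F.qw v → blockCard b v ≠ 1
  trivial_root_rule : ∀ v, F.isTrivialRoot v → 1 ≤ F.qw v → blockCard b v ≠ 1
  parity_rule : ParityProp F b

/-- Simple configurations (Definition 5.9 of the paper). -/
structure SimpleConfig (F : DecForest) (b : Fin F.n → Fin F.n) : Prop where
  root_prop : ∀ u v, F.isRoot u → F.isRoot v → b u = b v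
  singleton_leaf : ∀ v, F.isLeaf v → blockCard b v = 1 → 4 ≤ F.pw v
  paired_leaf : ∀ v v', v ≠ v' → F.isLeaf v → F.isLeaf v' → F.pw v = 1 → F.pw v' = 1 →
    b v = b v' → (∀ u, b u = b v → u = v ∨ u = v') →
    ∀ u u', F.parent v = some u → F.parent v' = some u' → b u ≠ b u'
  forbidden_weights : ∀ v, ¬F.isRoot v → blockCard b v = 1 →
    ¬(F.pw v = 1 ∧ F.qw v = 1) ∧ ¬(F.pw v = 2 ∧ F.qw v = 0)
  parity_prop : ParityProp F b

/-- Semi-simple configurations (Definition 7.1 of the paper). -/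
structure SemiSimpleConfig (F : DecForest) (b : Fin F.n → Fin F.n) : Prop where
  root_prop : ∀ u v, F.isRoot u → F.isRoot v → b u = b v
  sibling_prop : ∀ u v, F.sibling u v →
    ¬(b u = b v ∧ ∀ w, b w = b u → w = u ∨ w = v)
  singleton_leaf : ∀ v, F.isLeaf v → blockCard b v = 1 → 4 ≤ F.pw v
  forbidden_weights : ∀ v, ¬F.isRoot v → blockCard b v = 1 →
    ¬(F.pw v = 1 ∧ F.qw v = 1) ∧ ¬(F.pw v = 2 ∧ F.qw v = 0)
  parity_prop : ParityProp F b

end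

noncomputable section
attribute [local instance] Classical.propDecidable

/-- Total contribution of a vertex: its parity contribution (for non-roots) plus an
indicator of being a nullifying leaf. -/
def etaT (F : DecForest) (b : Fin F.n → Fin F.n) (v : Fin F.n) : ℕ :=
  (if F.parent v ≠ none then vertexContrib F v else 0) +
  (if ∃ v', NullifyingPair F b v v' then 1 else 0)

lemma eta_qw_pos (F : DecForest) (u : Fin F.n) (hu : F.childCount u ≠ 0) : 1 ≤ F.qw u := by
  have hne : (F.children u).Nonempty := Finset.card_pos.mp (Nat.pos_of_ne_zero hu)
  obtain ⟨v, hv⟩ := hne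
  have hv' : F.parent v = some u := by
    simpa [DecForest.children] using hv
  have hc := F.conservation u ⟨v, hv'⟩
  have h1 : 1 ≤ ∑ w ∈ Finset.univ.filter (fun w => F.parent w = some u), F.pw w := by
    calc 1 ≤ F.pw v := F.pw_pos v (by simp [hv'])
      _ ≤ _ := Finset.single_le_sum (f := F.pw) (fun i _ => Nat.zero_le _)
          (by simp [hv'])
  omega

lemma eta_one_le_contrib (F : DecForest) (v : Fin F.n) (hv : F.parent v ≠ none) :
    1 ≤ vertexContrib F v := by
  have hp : 1 ≤ F.pw v := F.pw_pos v hv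
  unfold vertexContrib
  rw [if_neg hv]
  split_ifs <;> omega

lemma eta_contrib_internal (F : DecForest) (v : Fin F.n) (hv : F.parent v ≠ none)
    (hc : F.childCount v ≠ 0) : vertexContrib F v = F.pw v + F.qw v := by
  unfold vertexContrib
  rw [if_neg hv, if_neg hc]

lemma eta_contrib_leaf (F : DecForest) (v : Fin F.n) (hv : F.parent v ≠ none)
    (hc : F.childCount v = 0) : vertexContrib F v = F.pw v := by
  unfold vertexContrib
  rw [if_neg hv, if_pos hc]

/-- If a non-root vertex has parity contribution `1`, it is a leaf of weight `1`. -/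
lemma eta_contrib_one (F : DecForest) (v : Fin F.n) (hv : F.parent v ≠ none)
    (h1 : vertexContrib F v = 1) : F.isLeaf v ∧ F.pw v = 1 := by
  have hp : 1 ≤ F.pw v := F.pw_pos v hv
  by_cases hc : F.childCount v = 0
  · exact ⟨⟨hv, hc⟩, by rw [eta_contrib_leaf F v hv hc] at h1; exact h1⟩
  · exfalso
    have hq := eta_qw_pos F v hc
    rw [eta_contrib_internal F v hv hc] at h1
    omega

/-- The key block estimate: a block containing no root has total contribution at
least `4`. -/
lemma eta_block_sum_ge (F : DecForest) (b : Fin F.n → Fin F.n) (hconf : SimpleConfig F b)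
    (j : Fin F.n) (hroot : ∀ u, b u = j → F.parent u ≠ none)
    (v₀ : Fin F.n) (hv₀ : b v₀ = j) :
    4 ≤ ∑ v ∈ Finset.univ.filter (fun v => b v = j), etaT F b v := by
  set B := Finset.univ.filter (fun v => b v = j) with hB
  have hmem : ∀ v, v ∈ B ↔ b v = j := by intro v; simp [hB]
  have hc1 : ∀ v ∈ B, 1 ≤ vertexContrib F v := fun v hv =>
    eta_one_le_contrib F v (hroot v ((hmem v).mp hv))
  have hparity : Even (∑ v ∈ B, vertexContrib F v) := by
    have hpp := hconf.parity_prop v₀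
    have hBe : B = Finset.univ.filter (fun u => b u = b v₀) := by
      ext u; simp [hB, hv₀]
    rw [hBe]
    convert hpp using 2
  have htc : ∀ v ∈ B, vertexContrib F v ≤ etaT F b v := by
    intro v hv
    unfold etaT
    rw [if_pos (hroot v ((hmem v).mp hv))]
    exact Nat.le_add_right _ _
  by_cases h4 : 4 ≤ ∑ v ∈ B, vertexContrib F v
  · calc 4 ≤ ∑ v ∈ B, vertexContrib F v := h4
      _ ≤ ∑ v ∈ B, etaT F b v := Finset.sum_le_sum htc
  · have hBne : B.Nonempty := ⟨v₀, (hmem v₀).mpr hv₀⟩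
    have hcard : B.card ≤ ∑ v ∈ B, vertexContrib F v := by
      calc B.card = ∑ _v ∈ B, 1 := by simp
        _ ≤ _ := Finset.sum_le_sum hc1
    have hcpos : 1 ≤ B.card := Finset.card_pos.mpr hBne
    have hsum2 : ∑ v ∈ B, vertexContrib F v = 2 := by
      obtain ⟨m, hm⟩ := hparity
      omega
    have hcard2 : B.card = 1 ∨ B.card = 2 := by omega
    rcases hcard2 with hc1' | hc2'
    · -- singleton block: contradiction with the simple-configuration axioms
      exfalso
      obtain ⟨v, hveq⟩ := Finset.card_eq_one.mp hc1'
      have hv₀v : v₀ = v := by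
        have := (hmem v₀).mpr hv₀
        rw [hveq] at this
        simpa using this
      subst hv₀v
      have hvB : v₀ ∈ B := (hmem v₀).mpr hv₀
      have hblock1 : blockCard b v₀ = 1 := by
        unfold blockCard
        have : Finset.univ.filter (fun u => b u = b v₀) = B := by
          ext u; simp [hB, hv₀]
        rw [this, hc1']
      have hsumv : ∑ v ∈ B, vertexContrib F v = vertexContrib F v₀ := by
        rw [hveq, Finset.sum_singleton]
      have hcv : vertexContrib F v₀ = 2 := by rw [← hsumv]; exact hsum2
      have hpv : F.parent v₀ ≠ none := hroot v₀ hv₀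
      by_cases hcc : F.childCount v₀ = 0
      · have hleaf : F.isLeaf v₀ := ⟨hpv, hcc⟩
        have h4p := hconf.singleton_leaf v₀ hleaf hblock1
        rw [eta_contrib_leaf F v₀ hpv hcc] at hcv
        omega
      · have hq := eta_qw_pos F v₀ hcc
        have hp := F.pw_pos v₀ hpv
        rw [eta_contrib_internal F v₀ hpv hcc] at hcv
        have hfw := (hconf.forbidden_weights v₀ hpv hblock1).1
        exact hfw ⟨by omega, by omega⟩
    · -- block of two leaves of weight one: a nullifying pair
      obtain ⟨v, v', hvv', hveq⟩ := Finset.card_eq_two.mp hc2'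
      have hvB : v ∈ B := by rw [hveq]; simp
      have hv'B : v' ∈ B := by rw [hveq]; simp
      have hsumpair : ∑ w ∈ B, vertexContrib F w = vertexContrib F v + vertexContrib F v' := by
        rw [hveq, Finset.sum_pair hvv']
      have hcv : vertexContrib F v = 1 ∧ vertexContrib F v' = 1 := by
        have h1 := hc1 v hvB
        have h2 := hc1 v' hv'B
        constructor <;> omega
      obtain ⟨hlv, hpv⟩ := eta_contrib_one F v (hroot v ((hmem v).mp hvB)) hcv.1
      obtain ⟨hlv', hpv'⟩ := eta_contrib_one F v' (hroot v' ((hmem v').mp hv'B)) hcv.2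
      have hbvv' : b v = b v' := by
        rw [(hmem v).mp hvB, (hmem v').mp hv'B]
      have hblk : ∀ u, b u = b v → u = v ∨ u = v' := by
        intro u hu
        have : u ∈ B := (hmem u).mpr (hu.trans ((hmem v).mp hvB))
        rw [hveq] at this
        simpa using this
      have hpar := hconf.paired_leaf v v' hvv' hlv hlv' hpv hpv' hbvv' hblk
      have hnp : NullifyingPair F b v v' :=
        ⟨hvv', hlv, hlv', hpv, hpv', hbvv', hblk, hpar⟩
      have hnp' : NullifyingPair F b v' v := by
        refine ⟨hvv'.symm, hlv', hlv, hpv', hpv, hbvv'.symm, ?_, ?_⟩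
        · intro u hu
          exact (hblk u (hu.trans hbvv'.symm)).symm
        · intro u u' h1 h2
          exact (hpar u' u h2 h1).symm
      have htv : etaT F b v = 2 := by
        unfold etaT
        rw [if_pos (hroot v ((hmem v).mp hvB)), if_pos ⟨v', hnp⟩, hcv.1]
      have htv' : etaT F b v' = 2 := by
        unfold etaT
        rw [if_pos (hroot v' ((hmem v').mp hv'B)), if_pos ⟨v, hnp'⟩, hcv.2]
      rw [hveq, Finset.sum_pair hvv', htv, htv']

/-- Summing the block estimate over all blocks. -/
lemma eta_total_ge (F : DecForest) (b : Fin F.n → Fin F.n) (hconf : SimpleConfig F b) :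
    4 * numBlocks b ≤ (∑ v : Fin F.n, etaT F b v) + 4 := by
  have hfib : ∑ j ∈ Finset.univ.image b,
      ∑ v ∈ Finset.univ.filter (fun v => b v = j), etaT F b v
      = ∑ v : Fin F.n, etaT F b v :=
    Finset.sum_fiberwise_of_maps_to (fun x _ => Finset.mem_image_of_mem b (Finset.mem_univ x)) _
  by_cases hr : ∃ v₀, F.isRoot v₀
  · obtain ⟨r₀, hr₀⟩ := hr
    have hj₀ : b r₀ ∈ Finset.univ.image b := Finset.mem_image_of_mem b (Finset.mem_univ r₀)
    have hlow : ∀ j ∈ (Finset.univ.image b).erase (b r₀),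
        4 ≤ ∑ v ∈ Finset.univ.filter (fun v => b v = j), etaT F b v := by
      intro j hj
      obtain ⟨hjne, hjmem⟩ := Finset.mem_erase.mp hj
      obtain ⟨v₀, _, hv₀⟩ := Finset.mem_image.mp hjmem
      refine eta_block_sum_ge F b hconf j ?_ v₀ hv₀
      intro u hu hup
      exact hjne (hu ▸ hconf.root_prop u r₀ hup hr₀)
    have hsum : 4 * ((Finset.univ.image b).erase (b r₀)).card ≤
        ∑ j ∈ (Finset.univ.image b).erase (b r₀),
          ∑ v ∈ Finset.univ.filter (fun v => b v = j), etaT F b v := by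
      calc 4 * ((Finset.univ.image b).erase (b r₀)).card
          = ∑ _j ∈ (Finset.univ.image b).erase (b r₀), 4 := by
            rw [Finset.sum_const, smul_eq_mul, mul_comm]
        _ ≤ _ := Finset.sum_le_sum hlow
    have hsub : ∑ j ∈ (Finset.univ.image b).erase (b r₀),
          ∑ v ∈ Finset.univ.filter (fun v => b v = j), etaT F b v ≤
        ∑ j ∈ Finset.univ.image b,
          ∑ v ∈ Finset.univ.filter (fun v => b v = j), etaT F b v :=
      Finset.sum_le_sum_of_subset (Finset.erase_subset _ _)
    have hcard : ((Finset.univ.image b).erase (b r₀)).card + 1 = numBlocks b := by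
      unfold numBlocks
      rw [Finset.card_erase_of_mem hj₀]
      have : 1 ≤ (Finset.univ.image b).card := Finset.card_pos.mpr ⟨b r₀, hj₀⟩
      omega
    omega
  · push_neg at hr
    have hlow : ∀ j ∈ Finset.univ.image b,
        4 ≤ ∑ v ∈ Finset.univ.filter (fun v => b v = j), etaT F b v := by
      intro j hjmem
      obtain ⟨v₀, _, hv₀⟩ := Finset.mem_image.mp hjmem
      exact eta_block_sum_ge F b hconf j (fun u _ => hr u) v₀ hv₀
    have hsum : 4 * numBlocks b ≤
        ∑ j ∈ Finset.univ.image b,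
          ∑ v ∈ Finset.univ.filter (fun v => b v = j), etaT F b v := by
      calc 4 * numBlocks b = ∑ _j ∈ Finset.univ.image b, 4 := by
            rw [Finset.sum_const, smul_eq_mul, mul_comm]; rfl
        _ ≤ _ := Finset.sum_le_sum hlow
    omega

/-- Conservation summed over the forest. -/
lemma eta_W_eq_Q (F : DecForest) :
    ∑ v ∈ Finset.univ.filter (fun v => F.parent v ≠ none), F.pw v
      = ∑ u ∈ Finset.univ.filter (fun u => F.childCount u ≠ 0), F.qw u := by
  have h1 : ∑ u ∈ Finset.univ.filter (fun u => F.childCount u ≠ 0), F.qw u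
      = ∑ u ∈ Finset.univ.filter (fun u => F.childCount u ≠ 0),
          ∑ v ∈ Finset.univ.filter (fun v => F.parent v = some u), F.pw v := by
    refine Finset.sum_congr rfl fun u hu => ?_
    have hcc : F.childCount u ≠ 0 := (Finset.mem_filter.mp hu).2
    obtain ⟨v, hv⟩ := Finset.card_pos.mp (Nat.pos_of_ne_zero hcc)
    have hv' : F.parent v = some u := by simpa [DecForest.children] using hv
    exact F.conservation u ⟨v, hv'⟩
  have h2 : ∑ u ∈ Finset.univ.filter (fun u => F.childCount u ≠ 0),
        ∑ v ∈ Finset.univ.filter (fun v => F.parent v = some u), F.pw v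
      = ∑ u : Fin F.n, ∑ v ∈ Finset.univ.filter (fun v => F.parent v = some u), F.pw v := by
    apply Finset.sum_subset (Finset.filter_subset _ _)
    intro u _ hu
    have hcc : F.childCount u = 0 := by
      by_contra h
      exact hu (Finset.mem_filter.mpr ⟨Finset.mem_univ u, h⟩)
    have : Finset.univ.filter (fun v => F.parent v = some u) = ∅ := by
      have := Finset.card_eq_zero.mp hcc
      simpa [DecForest.childCount, DecForest.children] using this
    rw [this, Finset.sum_empty]
  have h3 : ∑ u : Fin F.n, ∑ v ∈ Finset.univ.filter (fun v => F.parent v = some u), F.pw v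
      = ∑ v ∈ Finset.univ.filter (fun v => F.parent v ≠ none), F.pw v := by
    calc ∑ u : Fin F.n, ∑ v ∈ Finset.univ.filter (fun v => F.parent v = some u), F.pw v
        = ∑ u : Fin F.n, ∑ v : Fin F.n, if F.parent v = some u then F.pw v else 0 :=
          Finset.sum_congr rfl fun u _ => Finset.sum_filter _ _
      _ = ∑ v : Fin F.n, ∑ u : Fin F.n, if F.parent v = some u then F.pw v else 0 :=
          Finset.sum_comm
      _ = ∑ v : Fin F.n, if F.parent v ≠ none then F.pw v else 0 := by
          refine Finset.sum_congr rfl fun v _ => ?_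
          cases h : F.parent v with
          | none => simp [h]
          | some w => simp [h, Finset.sum_ite_eq]
      _ = ∑ v ∈ Finset.univ.filter (fun v => F.parent v ≠ none), F.pw v :=
          (Finset.sum_filter _ _).symm
  rw [h1, h2, h3]

/-- Decomposition of the total contribution. -/
lemma eta_sum_t_eq (F : DecForest) (b : Fin F.n → Fin F.n) :
    ∑ v : Fin F.n, etaT F b v
      = (∑ v ∈ Finset.univ.filter (fun v => F.parent v ≠ none), F.pw v)
        + (∑ v ∈ Finset.univ.filter
            (fun v => F.parent v ≠ none ∧ F.childCount v ≠ 0), F.qw v)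
        + nullLeafCount F b := by
  unfold etaT
  rw [Finset.sum_add_distrib]
  have hnull : ∑ v : Fin F.n, (if ∃ v', NullifyingPair F b v v' then 1 else 0)
      = nullLeafCount F b := by
    unfold nullLeafCount
    rw [Finset.card_filter]
  have hcontrib : ∑ v : Fin F.n, (if F.parent v ≠ none then vertexContrib F v else 0)
      = (∑ v ∈ Finset.univ.filter (fun v => F.parent v ≠ none), F.pw v)
        + (∑ v ∈ Finset.univ.filter
            (fun v => F.parent v ≠ none ∧ F.childCount v ≠ 0), F.qw v) := by
    rw [← Finset.sum_filter]
    have hstep : ∀ v ∈ Finset.univ.filter (fun v => F.parent v ≠ none),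
        vertexContrib F v = F.pw v + (if F.childCount v ≠ 0 then F.qw v else 0) := by
      intro v hv
      have hpv : F.parent v ≠ none := (Finset.mem_filter.mp hv).2
      by_cases hc : F.childCount v = 0
      · rw [eta_contrib_leaf F v hpv hc, if_neg (by simpa using hc)]; omega
      · rw [eta_contrib_internal F v hpv hc, if_pos hc]
    rw [Finset.sum_congr rfl hstep, Finset.sum_add_distrib]
    congr 1
    rw [← Finset.sum_filter, Finset.filter_filter]
  rw [hnull, hcontrib]

/-- Splitting the children-weight sum between roots and non-roots. -/
lemma eta_Q_split (F : DecForest) :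
    ∑ u ∈ Finset.univ.filter (fun u => F.childCount u ≠ 0), F.qw u
      = (∑ u ∈ Finset.univ.filter
            (fun u => F.parent u = none ∧ F.childCount u ≠ 0), F.qw u)
        + (∑ u ∈ Finset.univ.filter
            (fun u => F.parent u ≠ none ∧ F.childCount u ≠ 0), F.qw u) := by
  rw [← Finset.sum_filter_add_sum_filter_not
    (Finset.univ.filter (fun u => F.childCount u ≠ 0)) (fun u => F.parent u = none) F.qw]
  congr 1
  · rw [Finset.filter_filter]
    apply Finset.sum_congr _ fun _ _ => rfl
    ext u; simp [and_comm]
  · rw [Finset.filter_filter]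
    apply Finset.sum_congr _ fun _ _ => rfl
    ext u; simp [and_comm]

/-- The number of non-trivial roots is bounded by their total `q`-weight. -/
lemma eta_root_le (F : DecForest) :
    F.nontrivialRootCount ≤
      ∑ u ∈ Finset.univ.filter
        (fun u => F.parent u = none ∧ F.childCount u ≠ 0), F.qw u := by
  unfold DecForest.nontrivialRootCount
  have hset : Finset.univ.filter (fun v => F.isRoot v ∧ F.childCount v ≠ 0)
      = Finset.univ.filter (fun u => F.parent u = none ∧ F.childCount u ≠ 0) := by
    exact Finset.filter_congr (fun u _ => Iff.rfl)
  rw [hset]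
  calc (Finset.univ.filter (fun u => F.parent u = none ∧ F.childCount u ≠ 0)).card
      = ∑ _u ∈ Finset.univ.filter
          (fun u => F.parent u = none ∧ F.childCount u ≠ 0), 1 := by simp
    _ ≤ _ := Finset.sum_le_sum fun u hu =>
        eta_qw_pos F u (Finset.mem_filter.mp hu).2.2

/-- The combinatorial inequality, in natural numbers. -/
lemma eta_main_nat (F : DecForest) (b : Fin F.n → Fin F.n) (hconf : SimpleConfig F b) :
    4 * numBlocks b + F.nontrivialRootCount ≤
      2 * (∑ v ∈ Finset.univ.filter (fun v => F.parent v ≠ none), F.pw v)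
        + nullLeafCount F b + 4 := by
  have h1 := eta_total_ge F b hconf
  have h2 := eta_sum_t_eq F b
  have h3 := eta_W_eq_Q F
  have h4 := eta_Q_split F
  have h5 := eta_root_le F
  omega

/-- **Proposition (exponent lower bound for simple configurations).** -/
theorem eta_exponent_lower_bound
    (F : DecForest) (b : Fin F.n → Fin F.n) (hconf : SimpleConfig F b) :
    (F.nontrivialRootCount : ℝ) / 4 ≤ etaExponent F b := by
  have h := eta_main_nat F b hconf
  unfold etaExponent
  have hcast : ∑ v ∈ Finset.univ.filter (fun v => F.parent v ≠ none), (F.pw v : ℝ)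
      = ((∑ v ∈ Finset.univ.filter (fun v => F.parent v ≠ none), F.pw v : ℕ) : ℝ) := by
    push_cast
    rfl
  rw [hcast]
  have h' : (4 * numBlocks b + F.nontrivialRootCount : ℝ) ≤
      2 * ((∑ v ∈ Finset.univ.filter (fun v => F.parent v ≠ none), F.pw v : ℕ) : ℝ)
        + nullLeafCount F b + 4 := by
    exact_mod_cast h
  linarith

end
end

section
/- (Lemma: diagonal renormalization of a semi-random matrix). Let M = S Ψ S ∈ ℝ^{N×N} be a semi-random matrix ensemble with constant σψ² = 1. Then there exists a deterministic matrix Ψ̂ such that M̂ := S Ψ̂ S is a semi-random matrix ensemble with constant σψ² = 1 satisfying the exact normalization (Ψ̂Ψ̂ᵀ)_{ii} = 1 for every i ∈ [N], and the operator norm of the difference vanishes: ‖M − M̂‖_op → 0 as N → ∞. -/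
open MeasureTheory ProbabilityTheory Filter Matrix
open scoped ENNReal NNReal Topology

noncomputable section

/-- The ℓ₂ → ℓ₂ operator norm of a real square matrix. -/
def matOpNorm {N : ℕ} (A : Matrix (Fin N) (Fin N) ℝ) : ℝ :=
  ‖LinearMap.toContinuousLinearMap (Matrix.toEuclideanLin A)‖

/-- Conjugation of a matrix by a diagonal sign matrix: `(S Ψ S)_{ij} = s_i Ψ_{ij} s_j`. -/
def signConj {N : ℕ} (Ψ : Matrix (Fin N) (Fin N) ℝ) (s : Fin N → ℝ) :
    Matrix (Fin N) (Fin N) ℝ :=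
  Matrix.of fun i j => s i * Ψ i j * s j

/-- Conditions (2a)-(2d) of the definition of a semi-random matrix ensemble. -/
structure IsPsiSequence (Ψ : ∀ N : ℕ, Matrix (Fin N) (Fin N) ℝ) (σψsq : ℝ) : Prop where
  pos : 0 < σψsq
  entry : ∀ ε : ℝ, 0 < ε → ∃ C : ℝ, ∀ N : ℕ, ∀ i j : Fin N,
    |Ψ N i j| ≤ C * (N : ℝ) ^ (-(1 / 2 : ℝ) + ε)
  op : ∃ C : ℝ, ∀ N : ℕ, matOpNorm (Ψ N) ≤ C
  offdiag : ∀ ε : ℝ, 0 < ε → ∃ C : ℝ, ∀ N : ℕ, ∀ i j : Fin N, i ≠ j →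
    |(Ψ N * (Ψ N)ᵀ) i j| ≤ C * (N : ℝ) ^ (-(1 / 2 : ℝ) + ε)
  diag : ∀ ε : ℝ, 0 < ε → ∀ᶠ N : ℕ in atTop, ∀ i : Fin N,
    |(Ψ N * (Ψ N)ᵀ) i i - σψsq| ≤ ε

open scoped Matrix.Norms.L2Operator

lemma matOpNorm_eq {N : ℕ} (A : Matrix (Fin N) (Fin N) ℝ) : matOpNorm A = ‖A‖ := rfl

lemma matOpNorm_nonneg {N : ℕ} (A : Matrix (Fin N) (Fin N) ℝ) : 0 ≤ matOpNorm A :=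
  norm_nonneg _

lemma matOpNorm_mul_le {N : ℕ} (A B : Matrix (Fin N) (Fin N) ℝ) :
    matOpNorm (A * B) ≤ matOpNorm A * matOpNorm B := by
  rw [matOpNorm_eq, matOpNorm_eq, matOpNorm_eq]
  exact Matrix.l2_opNorm_mul A B

lemma matOpNorm_diagonal_le {N : ℕ} (d : Fin N → ℝ) (c : ℝ) (hc : 0 ≤ c)
    (h : ∀ i, |d i| ≤ c) : matOpNorm (Matrix.diagonal d) ≤ c := by
  rw [matOpNorm_eq, Matrix.l2_opNorm_def]
  refine ContinuousLinearMap.opNorm_le_bound _ hc fun x => ?_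
  show ‖Matrix.toEuclideanLin (Matrix.diagonal d) x‖ ≤ c * ‖x‖
  rw [EuclideanSpace.norm_eq, EuclideanSpace.norm_eq]
  have key : ∀ i, ‖(Matrix.toEuclideanLin (Matrix.diagonal d) x) i‖ ^ 2 ≤ (c * ‖x i‖) ^ 2 := by
    intro i
    have h1 : (Matrix.toEuclideanLin (Matrix.diagonal d) x) i = d i * x i := by
      simp [Matrix.toEuclideanLin_apply, Matrix.mulVec_diagonal]
    rw [h1]
    have h2 : ‖d i * x i‖ ≤ c * ‖x i‖ := by
      rw [norm_mul]
      exact mul_le_mul_of_nonneg_right (h i) (norm_nonneg _)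
    exact pow_le_pow_left₀ (norm_nonneg _) h2 2
  calc Real.sqrt (∑ i, ‖(Matrix.toEuclideanLin (Matrix.diagonal d) x) i‖ ^ 2)
      ≤ Real.sqrt (∑ i, (c * ‖x i‖) ^ 2) :=
        Real.sqrt_le_sqrt (Finset.sum_le_sum fun i _ => key i)
    _ = c * Real.sqrt (∑ i, ‖x i‖ ^ 2) := by
        have hsum : ∑ i, (c * ‖x i‖) ^ 2 = c ^ 2 * ∑ i, ‖x i‖ ^ 2 := by
          rw [Finset.mul_sum]; exact Finset.sum_congr rfl fun i _ => by ring
        rw [hsum, Real.sqrt_mul (sq_nonneg c), Real.sqrt_sq hc]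

lemma matOpNorm_one_le {N : ℕ} : matOpNorm (1 : Matrix (Fin N) (Fin N) ℝ) ≤ 1 := by
  rw [← Matrix.diagonal_one]
  exact matOpNorm_diagonal_le _ 1 zero_le_one (fun i => by simp)

lemma signConj_eq {N : ℕ} (A : Matrix (Fin N) (Fin N) ℝ) (s : Fin N → ℝ) :
    signConj A s = Matrix.diagonal s * A * Matrix.diagonal s := by
  ext i j
  rw [Matrix.mul_diagonal, Matrix.diagonal_mul]
  rfl

lemma signConj_sub {N : ℕ} (A B : Matrix (Fin N) (Fin N) ℝ) (s : Fin N → ℝ) :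
    signConj A s - signConj B s = signConj (A - B) s := by
  ext i j
  simp only [Matrix.sub_apply, signConj, Matrix.of_apply]
  ring

lemma matOpNorm_signConj_le {N : ℕ} (A : Matrix (Fin N) (Fin N) ℝ) (s : Fin N → ℝ)
    (hs : ∀ i, |s i| ≤ 1) : matOpNorm (signConj A s) ≤ matOpNorm A := by
  rw [signConj_eq]
  have h1 : matOpNorm (Matrix.diagonal s) ≤ 1 := matOpNorm_diagonal_le s 1 zero_le_one hs
  calc matOpNorm (Matrix.diagonal s * A * Matrix.diagonal s)
      ≤ matOpNorm (Matrix.diagonal s * A) * matOpNorm (Matrix.diagonal s) :=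
        matOpNorm_mul_le _ _
    _ ≤ (matOpNorm (Matrix.diagonal s) * matOpNorm A) * matOpNorm (Matrix.diagonal s) :=
        mul_le_mul_of_nonneg_right (matOpNorm_mul_le _ _) (matOpNorm_nonneg _)
    _ ≤ (1 * matOpNorm A) * 1 :=
        mul_le_mul (mul_le_mul_of_nonneg_right h1 (matOpNorm_nonneg A)) h1
          (matOpNorm_nonneg _) (by simpa using matOpNorm_nonneg A)
    _ = matOpNorm A := by ring

lemma one_sub_inv_sqrt_le {x δ : ℝ} (hδ0 : 0 ≤ δ) (hδ : δ ≤ 1/2) (hx : |x - 1| ≤ δ) :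
    |1 - (Real.sqrt x)⁻¹| ≤ 2 * δ := by
  obtain ⟨h1, h2⟩ := abs_le.mp hx
  have hx0 : (1:ℝ)/2 ≤ x := by linarith
  have hs0 : 0 < Real.sqrt x := Real.sqrt_pos.mpr (by linarith)
  have hss : Real.sqrt x * Real.sqrt x = x := Real.mul_self_sqrt (by linarith)
  have hshalf : (1:ℝ)/2 ≤ Real.sqrt x := by nlinarith [Real.sqrt_nonneg x]
  have hs1 : |Real.sqrt x - 1| ≤ δ := by
    rw [abs_le]
    constructor <;> nlinarith
  have heq : 1 - (Real.sqrt x)⁻¹ = (Real.sqrt x - 1) / Real.sqrt x := by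
    field_simp
  rw [heq, abs_div, abs_of_pos hs0, div_le_iff₀ hs0]
  calc |Real.sqrt x - 1| ≤ δ := hs1
    _ = 2 * δ * (1/2) := by ring
    _ ≤ 2 * δ * Real.sqrt x := by nlinarith

open scoped Classical in
/-- Renormalization of a single matrix. -/
def renorm {N : ℕ} (A : Matrix (Fin N) (Fin N) ℝ) : Matrix (Fin N) (Fin N) ℝ :=
  if (∀ i, 1/2 ≤ (A * Aᵀ) i i) then
    Matrix.diagonal (fun i => (Real.sqrt ((A * Aᵀ) i i))⁻¹) * A
  else 1

lemma renorm_pos {N : ℕ} {A : Matrix (Fin N) (Fin N) ℝ} (h : ∀ i, 1/2 ≤ (A * Aᵀ) i i) :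
    renorm A = Matrix.diagonal (fun i => (Real.sqrt ((A * Aᵀ) i i))⁻¹) * A := by
  rw [renorm, if_pos h]

lemma renorm_neg {N : ℕ} {A : Matrix (Fin N) (Fin N) ℝ} (h : ¬ (∀ i, 1/2 ≤ (A * Aᵀ) i i)) :
    renorm A = 1 := by
  rw [renorm, if_neg h]

lemma dcoef_abs_le {N : ℕ} {A : Matrix (Fin N) (Fin N) ℝ} (h : ∀ i, 1/2 ≤ (A * Aᵀ) i i)
    (i : Fin N) : |(Real.sqrt ((A * Aᵀ) i i))⁻¹| ≤ Real.sqrt 2 := by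
  have h0 : 0 ≤ (Real.sqrt ((A * Aᵀ) i i))⁻¹ := inv_nonneg.mpr (Real.sqrt_nonneg _)
  rw [abs_of_nonneg h0]
  have h1 : Real.sqrt (1/2) ≤ Real.sqrt ((A * Aᵀ) i i) := Real.sqrt_le_sqrt (h i)
  have h2 : (0:ℝ) < Real.sqrt (1/2) := Real.sqrt_pos.mpr (by norm_num)
  have h3 : (Real.sqrt ((A * Aᵀ) i i))⁻¹ ≤ (Real.sqrt (1/2))⁻¹ :=
    inv_anti₀ h2 h1
  have h4 : (Real.sqrt ((1:ℝ)/2))⁻¹ = Real.sqrt 2 := by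
    rw [one_div, Real.sqrt_inv, inv_inv]
  rw [h4] at h3
  exact h3

lemma renorm_mul_transpose {N : ℕ} {A : Matrix (Fin N) (Fin N) ℝ}
    (h : ∀ i, 1/2 ≤ (A * Aᵀ) i i) (i j : Fin N) :
    (renorm A * (renorm A)ᵀ) i j =
      (Real.sqrt ((A * Aᵀ) i i))⁻¹ * ((A * Aᵀ) i j) * (Real.sqrt ((A * Aᵀ) j j))⁻¹ := by
  rw [renorm_pos h, Matrix.transpose_mul, Matrix.diagonal_transpose]
  have hassoc : Matrix.diagonal (fun i => (Real.sqrt ((A * Aᵀ) i i))⁻¹) * A *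
      (Aᵀ * Matrix.diagonal (fun i => (Real.sqrt ((A * Aᵀ) i i))⁻¹)) =
      Matrix.diagonal (fun i => (Real.sqrt ((A * Aᵀ) i i))⁻¹) * (A * Aᵀ) *
      Matrix.diagonal (fun i => (Real.sqrt ((A * Aᵀ) i i))⁻¹) := by
    simp only [Matrix.mul_assoc]
  rw [hassoc, Matrix.mul_diagonal, Matrix.diagonal_mul]

lemma renorm_diag_one {N : ℕ} (A : Matrix (Fin N) (Fin N) ℝ) (i : Fin N) :
    (renorm A * (renorm A)ᵀ) i i = 1 := by
  by_cases h : ∀ i, 1/2 ≤ (A * Aᵀ) i i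
  · rw [renorm_mul_transpose h]
    have hx : (0:ℝ) < (A * Aᵀ) i i := lt_of_lt_of_le (by norm_num) (h i)
    have hs0 : 0 < Real.sqrt ((A * Aᵀ) i i) := Real.sqrt_pos.mpr hx
    have hss : Real.sqrt ((A * Aᵀ) i i) * Real.sqrt ((A * Aᵀ) i i) = (A * Aᵀ) i i :=
      Real.mul_self_sqrt hx.le
    field_simp
    rw [Real.sq_sqrt hx.le]
  · rw [renorm_neg h, Matrix.transpose_one, Matrix.mul_one, Matrix.one_apply_eq]

/-- **Lemma (diagonal renormalization of a semi-random matrix).**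
Given a semi-random ensemble `M = S Ψ S` with `σψ² = 1`, there is a deterministic
sequence `Ψ̂` such that `M̂ = S Ψ̂ S` is semi-random with `σψ² = 1`,
`(Ψ̂ Ψ̂ᵀ)_{ii} = 1` exactly for every `i`, and `‖M − M̂‖_op → 0`. -/
theorem diagonal_renormalization
    (Ψ : ∀ N : ℕ, Matrix (Fin N) (Fin N) ℝ) (hΨ : IsPsiSequence Ψ 1) :
    ∃ Ψh : ∀ N : ℕ, Matrix (Fin N) (Fin N) ℝ,
      IsPsiSequence Ψh 1 ∧
      (∀ N : ℕ, ∀ i : Fin N, (Ψh N * (Ψh N)ᵀ) i i = 1) ∧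
      ∀ s : ∀ N : ℕ, Fin N → ℝ, (∀ N i, s N i = 1 ∨ s N i = -1) →
        Tendsto (fun N => matOpNorm (signConj (Ψ N) (s N) - signConj (Ψh N) (s N)))
          atTop (nhds 0) := by
  classical
  obtain ⟨C₀, hC₀⟩ := hΨ.op
  set B : ℝ := max C₀ 1 with hBdef
  have hB1 : (1:ℝ) ≤ B := le_max_right _ _
  have hBop : ∀ N, matOpNorm (Ψ N) ≤ B := fun N => (hC₀ N).trans (le_max_left _ _)
  -- Eventually all diagonal entries are at least 1/2.
  have hPev : ∀ᶠ N : ℕ in atTop, ∀ i : Fin N, 1/2 ≤ (Ψ N * (Ψ N)ᵀ) i i := by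
    filter_upwards [hΨ.diag (1/2) (by norm_num)] with N hN i
    have := (abs_le.mp (hN i)).1
    linarith
  obtain ⟨N₀, hN₀⟩ := eventually_atTop.mp hPev
  refine ⟨fun N => renorm (Ψ N), ?_, fun N i => renorm_diag_one (Ψ N) i, ?_⟩
  · constructor
    · exact one_pos
    · -- entry bound
      intro ε hε
      obtain ⟨C, hC⟩ := hΨ.entry ε hε
      refine ⟨max (Real.sqrt 2 * C) (N₀ : ℝ), fun N i j => ?_⟩
      have hpow0 : (0:ℝ) ≤ (N : ℝ) ^ (-(1/2 : ℝ) + ε) :=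
        Real.rpow_nonneg (Nat.cast_nonneg N) _
      by_cases h : ∀ i : Fin N, 1/2 ≤ (Ψ N * (Ψ N)ᵀ) i i
      · rw [renorm_pos h, Matrix.diagonal_mul]
        calc |(Real.sqrt ((Ψ N * (Ψ N)ᵀ) i i))⁻¹ * Ψ N i j|
            = |(Real.sqrt ((Ψ N * (Ψ N)ᵀ) i i))⁻¹| * |Ψ N i j| := abs_mul _ _
          _ ≤ Real.sqrt 2 * (C * (N : ℝ) ^ (-(1/2 : ℝ) + ε)) :=
              mul_le_mul (dcoef_abs_le h i) (hC N i j) (abs_nonneg _) (Real.sqrt_nonneg 2)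
          _ = (Real.sqrt 2 * C) * (N : ℝ) ^ (-(1/2 : ℝ) + ε) := by ring
          _ ≤ max (Real.sqrt 2 * C) (N₀ : ℝ) * (N : ℝ) ^ (-(1/2 : ℝ) + ε) :=
              mul_le_mul_of_nonneg_right (le_max_left _ _) hpow0
      · rw [renorm_neg h]
        have hNlt : N < N₀ := by
          by_contra hge
          exact h (hN₀ N (le_of_not_gt hge))
        have hN1 : (1:ℝ) ≤ (N : ℝ) := by exact_mod_cast i.pos
        have hNN0 : (N:ℝ) ≤ (N₀:ℝ) := by exact_mod_cast hNlt.le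
        have hpow : (N:ℝ)⁻¹ ≤ (N:ℝ) ^ (-(1/2:ℝ) + ε) := by
          rw [← Real.rpow_neg_one]
          exact Real.rpow_le_rpow_of_exponent_le hN1 (by linarith)
        have hinv : (0:ℝ) ≤ (N:ℝ)⁻¹ := by positivity
        have hNpos : (0:ℝ) < (N:ℝ) := by linarith
        have h1le : (1:ℝ) ≤ (N₀:ℝ) * (N:ℝ)⁻¹ := by
          calc (1:ℝ) = (N:ℝ) * (N:ℝ)⁻¹ := (mul_inv_cancel₀ hNpos.ne').symm
            _ ≤ (N₀:ℝ) * (N:ℝ)⁻¹ := mul_le_mul_of_nonneg_right hNN0 hinv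
        have hone : |(1 : Matrix (Fin N) (Fin N) ℝ) i j| ≤ 1 := by
          rw [Matrix.one_apply]
          split <;> simp
        calc |(1 : Matrix (Fin N) (Fin N) ℝ) i j| ≤ 1 := hone
          _ ≤ (N₀:ℝ) * (N:ℝ)⁻¹ := h1le
          _ ≤ (N₀:ℝ) * (N:ℝ) ^ (-(1/2:ℝ)+ε) :=
              mul_le_mul_of_nonneg_left hpow (Nat.cast_nonneg _)
          _ ≤ max (Real.sqrt 2 * C) (N₀:ℝ) * (N:ℝ) ^ (-(1/2:ℝ)+ε) :=
              mul_le_mul_of_nonneg_right (le_max_right _ _) hpow0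
    · -- operator norm bound
      refine ⟨max (Real.sqrt 2 * B) 1, fun N => ?_⟩
      by_cases h : ∀ i : Fin N, 1/2 ≤ (Ψ N * (Ψ N)ᵀ) i i
      · rw [renorm_pos h]
        calc matOpNorm (Matrix.diagonal
              (fun i => (Real.sqrt ((Ψ N * (Ψ N)ᵀ) i i))⁻¹) * Ψ N)
            ≤ matOpNorm (Matrix.diagonal
                (fun i => (Real.sqrt ((Ψ N * (Ψ N)ᵀ) i i))⁻¹)) * matOpNorm (Ψ N) :=
              matOpNorm_mul_le _ _
          _ ≤ Real.sqrt 2 * B :=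
              mul_le_mul (matOpNorm_diagonal_le _ _ (Real.sqrt_nonneg 2) (dcoef_abs_le h))
                (hBop N) (matOpNorm_nonneg _) (Real.sqrt_nonneg 2)
          _ ≤ max (Real.sqrt 2 * B) 1 := le_max_left _ _
      · rw [renorm_neg h]
        exact matOpNorm_one_le.trans (le_max_right _ _)
    · -- offdiagonal bound
      intro ε hε
      obtain ⟨C, hC⟩ := hΨ.offdiag ε hε
      refine ⟨max (2 * C) 0, fun N i j hij => ?_⟩
      have hpow0 : (0:ℝ) ≤ (N : ℝ) ^ (-(1/2 : ℝ) + ε) :=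
        Real.rpow_nonneg (Nat.cast_nonneg N) _
      by_cases h : ∀ i : Fin N, 1/2 ≤ (Ψ N * (Ψ N)ᵀ) i i
      · rw [renorm_mul_transpose h]
        have h22 : Real.sqrt 2 * Real.sqrt 2 = 2 := Real.mul_self_sqrt (by norm_num)
        have hCpow : (0:ℝ) ≤ C * (N : ℝ) ^ (-(1/2 : ℝ) + ε) :=
          (abs_nonneg _).trans (hC N i j hij)
        calc |(Real.sqrt ((Ψ N * (Ψ N)ᵀ) i i))⁻¹ * ((Ψ N * (Ψ N)ᵀ) i j) *
              (Real.sqrt ((Ψ N * (Ψ N)ᵀ) j j))⁻¹|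
            = |(Real.sqrt ((Ψ N * (Ψ N)ᵀ) i i))⁻¹| * |(Ψ N * (Ψ N)ᵀ) i j| *
              |(Real.sqrt ((Ψ N * (Ψ N)ᵀ) j j))⁻¹| := by rw [abs_mul, abs_mul]
          _ ≤ Real.sqrt 2 * (C * (N : ℝ) ^ (-(1/2 : ℝ) + ε)) * Real.sqrt 2 := by
              have e1 : |(Real.sqrt ((Ψ N * (Ψ N)ᵀ) i i))⁻¹| * |(Ψ N * (Ψ N)ᵀ) i j|
                  ≤ Real.sqrt 2 * (C * (N : ℝ) ^ (-(1/2 : ℝ) + ε)) :=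
                mul_le_mul (dcoef_abs_le h i) (hC N i j hij) (abs_nonneg _) (Real.sqrt_nonneg 2)
              exact mul_le_mul e1 (dcoef_abs_le h j) (abs_nonneg _)
                (mul_nonneg (Real.sqrt_nonneg 2) hCpow)
          _ = (2 * C) * (N : ℝ) ^ (-(1/2 : ℝ) + ε) := by
              rw [show Real.sqrt 2 * (C * (N : ℝ) ^ (-(1/2 : ℝ) + ε)) * Real.sqrt 2
                  = (Real.sqrt 2 * Real.sqrt 2) * (C * (N : ℝ) ^ (-(1/2 : ℝ) + ε)) from by ring,
                h22]
              ring
          _ ≤ max (2 * C) 0 * (N : ℝ) ^ (-(1/2 : ℝ) + ε) :=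
              mul_le_mul_of_nonneg_right (le_max_left _ _) hpow0
      · rw [renorm_neg h, Matrix.transpose_one, Matrix.mul_one, Matrix.one_apply_ne hij]
        simpa using mul_nonneg (le_max_right (2 * C) 0) hpow0
    · -- diagonal convergence (trivial: exactly 1)
      intro ε hε
      refine Eventually.of_forall fun N i => ?_
      rw [renorm_diag_one (Ψ N) i]
      simpa using hε.le
  · -- operator norm convergence
    intro s hs
    have hs1 : ∀ N i, |s N i| ≤ 1 := by
      intro N i; rcases hs N i with h | h <;> rw [h] <;> norm_num
    rw [NormedAddCommGroup.tendsto_nhds_zero]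
    intro ε hε
    have hB0 : (0:ℝ) < B := lt_of_lt_of_le one_pos hB1
    set δ : ℝ := min (1/2) (ε / (4 * B)) with hδdef
    have hδ0 : 0 < δ := lt_min (by norm_num) (div_pos hε (by linarith))
    filter_upwards [hΨ.diag δ hδ0] with N hN
    have hP : ∀ i : Fin N, 1/2 ≤ (Ψ N * (Ψ N)ᵀ) i i := by
      intro i
      have h1 := (abs_le.mp (hN i)).1
      have hle : δ ≤ 1/2 := min_le_left _ _
      linarith
    rw [signConj_sub]
    have hrw : Ψ N - renorm (Ψ N) =
        Matrix.diagonal (fun i => 1 - (Real.sqrt ((Ψ N * (Ψ N)ᵀ) i i))⁻¹) * Ψ N := by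
      rw [renorm_pos hP]
      ext i j
      rw [Matrix.sub_apply, Matrix.diagonal_mul, Matrix.diagonal_mul]
      ring
    have hdiagb : matOpNorm (Matrix.diagonal
        (fun i => 1 - (Real.sqrt ((Ψ N * (Ψ N)ᵀ) i i))⁻¹)) ≤ 2 * δ :=
      matOpNorm_diagonal_le _ _ (by linarith)
        (fun i => one_sub_inv_sqrt_le hδ0.le (min_le_left _ _) (hN i))
    have hbound : matOpNorm (signConj (Ψ N - renorm (Ψ N)) (s N)) ≤ 2 * δ * B := by
      calc matOpNorm (signConj (Ψ N - renorm (Ψ N)) (s N))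
          ≤ matOpNorm (Ψ N - renorm (Ψ N)) := matOpNorm_signConj_le _ _ (hs1 N)
        _ ≤ 2 * δ * B := by
            rw [hrw]
            exact (matOpNorm_mul_le _ _).trans
              (mul_le_mul hdiagb (hBop N) (matOpNorm_nonneg _) (by linarith))
    have hfinal : 2 * δ * B < ε := by
      have h1 : δ ≤ ε / (4 * B) := min_le_right _ _
      have h2 : 2 * δ * B ≤ 2 * (ε / (4 * B)) * B := by nlinarith
      have heq : 2 * (ε / (4 * B)) * B = ε / 2 := by field_simp; ring
      linarith
    calc ‖matOpNorm (signConj (Ψ N - renorm (Ψ N)) (s N))‖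
        = matOpNorm (signConj (Ψ N - renorm (Ψ N)) (s N)) :=
          Real.norm_of_nonneg (matOpNorm_nonneg _)
      _ ≤ 2 * δ * B := hbound
      _ < ε := hfinal

end
end
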